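/- Let N ≥ 1 be an integer, M > N an integer, and 0 < P_n < P_s reals. Set ζ = (P_n − P_s)/(P_s P_n). Let X ~ Gamma(N, P_s) and Y ~ Gamma(M−N, P_n) be independent. Then for every real c > 0, setting τ_1 = P_s^{−1} + c and τ_2 = P_n^{−1} + c, E[ e^{-c(X+Y)} ] = Σ_{n=0}^{N-1} [ C(M−N+n−1, n) · P_s^{M−2N} / ( ζ^n (P_s − P_n)^{M−N} ) ] · [ 1/τ_1^{N−n} − Σ_{m=0}^{M−N+n−1} C(N−n−1+m, m) (−ζ)^m / τ_2^{N−n+m} ]. -/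

import Mathlib

open MeasureTheory ProbabilityTheory Real


lemma claimA (j L : ℕ) (x : ℝ) :
    (1-x)^(j+1) * ∑ m ∈ Finset.range (L+1), ((j+m).choose m : ℝ) * x^m
      + x^(L+1) * ∑ i ∈ Finset.range (j+1), ((L+i).choose i : ℝ) * (1-x)^i = 1 := by
  induction L with
  | zero =>
    have h := geom_sum_mul (1-x) (j+1)
    simp only [Nat.zero_add, Nat.choose_self, Nat.cast_one, one_mul, Finset.range_one,
      Finset.sum_singleton, Nat.add_zero, Nat.choose_zero_right, pow_zero, mul_one, zero_add,
      pow_one]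
    linarith [h, sq_nonneg x]
  | succ L ih =>
    have key : ∀ i : ℕ, ((L+i).choose i : ℝ) * (1-x)^i - x * (((L+1+i).choose i : ℝ) * (1-x)^i)
        = ((L+(i+1)).choose (L+1) : ℝ) * (1-x)^(i+1) - ((L+i).choose (L+1) : ℝ) * (1-x)^i := by
      intro i
      have h1 : (L+i).choose i = (L+i).choose L := by
        have := Nat.choose_symm (show L ≤ L+i by omega)
        rw [show L+i-L = i by omega] at this; exact this
      have h2 : (L+1+i).choose i = (L+1+i).choose (L+1) := by
        have := Nat.choose_symm (show L+1 ≤ L+1+i by omega)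
        rw [show L+1+i-(L+1) = i by omega] at this; exact this
      have h3 : (L+1+i).choose (L+1) = (L+i).choose L + (L+i).choose (L+1) := by
        rw [show L+1+i = (L+i)+1 by omega]
        exact Nat.choose_succ_succ' (L+i) L
      have h4 : L + (i+1) = L+1+i := by omega
      rw [h1, h2, h4, h3]
      push_cast
      ring
    have tel : (∑ i ∈ Finset.range (j+1), ((L+i).choose i : ℝ) * (1-x)^i)
        - x * ∑ i ∈ Finset.range (j+1), ((L+1+i).choose i : ℝ) * (1-x)^i
        = ((L+(j+1)).choose (L+1) : ℝ) * (1-x)^(j+1) := by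
      rw [Finset.mul_sum, ← Finset.sum_sub_distrib]
      rw [Finset.sum_congr rfl (fun i _ => key i)]
      rw [Finset.sum_range_sub (fun i => ((L+i).choose (L+1) : ℝ) * (1-x)^i)]
      simp [Nat.choose_eq_zero_of_lt (by omega : L < L+1)]
    rw [Finset.sum_range_succ]
    have hcc : ((j+(L+1)).choose (L+1) : ℝ) = ((L+(j+1)).choose (L+1) : ℝ) := by
      rw [show j+(L+1) = L+(j+1) by omega]
    linear_combination ih - x^(L+1) * tel + (1-x)^(j+1) * x^(L+1) * hcc

lemma claimB (A R : ℕ) (h : R ≤ A) :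
    ∑ n ∈ Finset.range (R+1), (-1:ℝ)^n * ((A - R + n).choose n : ℝ) * (A.choose (R - n) : ℝ)
      = if R = 0 then 1 else 0 := by
  have step : ∀ n ∈ Finset.range (R+1),
      (-1:ℝ)^n * ((A - R + n).choose n : ℝ) * (A.choose (R - n) : ℝ)
      = (A.choose R : ℝ) * ((-1:ℝ)^n * (R.choose n : ℝ)) := by
    intro n hn
    rw [Finset.mem_range] at hn
    have hn' : n ≤ R := by omega
    have key : A.choose R * R.choose (R - n) = A.choose (R-n) * (A - (R-n)).choose (R - (R-n)) :=
      Nat.choose_mul (n := A) (Nat.sub_le _ _)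
    rw [show A - (R-n) = A - R + n by omega, show R - (R-n) = n by omega] at key
    have key' : (A.choose R : ℝ) * (R.choose (R-n) : ℝ)
        = (A.choose (R-n) : ℝ) * ((A - R + n).choose n : ℝ) := by exact_mod_cast key
    have hsymm : (R.choose (R - n) : ℝ) = (R.choose n : ℝ) := by
      rw [Nat.choose_symm hn']
    rw [← hsymm]
    linear_combination (-(-1:ℝ)^n) * key'
  rw [Finset.sum_congr rfl step, ← Finset.mul_sum]
  have : (∑ n ∈ Finset.range (R+1), (-1:ℝ)^n * (R.choose n : ℝ))
      = ((if R = 0 then 1 else 0 : ℤ) : ℝ) := by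
    rw [← Int.alternating_sum_range_choose]
    push_cast
    rfl
  rw [this]
  by_cases hR : R = 0 <;> simp [hR]

lemma triangle (f : ℕ → ℕ → ℝ) (N : ℕ) :
    ∑ n ∈ Finset.range N, ∑ i ∈ Finset.range (N - n), f n i
      = ∑ p ∈ Finset.range N, ∑ n ∈ Finset.range (p+1), f n (p - n) := by
  induction N with
  | zero => simp
  | succ N ih =>
    rw [Finset.sum_range_succ, Finset.sum_range_succ (fun p => ∑ n ∈ Finset.range (p+1), f n (p-n))]
    rw [show N + 1 - N = 1 by omega]
    have split : ∀ n ∈ Finset.range N, ∑ i ∈ Finset.range (N + 1 - n), f n i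
        = (∑ i ∈ Finset.range (N - n), f n i) + f n (N - n) := by
      intro n hn
      rw [Finset.mem_range] at hn
      rw [show N + 1 - n = (N - n) + 1 by omega, Finset.sum_range_succ]
    rw [Finset.sum_congr rfl split, Finset.sum_add_distrib, ih, Finset.sum_range_succ (fun n => f n (N - n))]
    simp [add_assoc]

lemma main_alg (N M : ℕ) (hN : 1 ≤ N) (hM : N < M) (a b : ℝ) (ha : a ≠ 0) (hb : b ≠ 0)
    (hd : b - a ≠ 0) :
    ∑ n ∈ Finset.range N, (((M - N + n - 1).choose n : ℝ) * (-1)^n / (b - a)^(M - N + n)) *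
      (1 / a ^ (N - n) -
        ∑ m ∈ Finset.range (M - N + n),
          ((N - n - 1 + m).choose m : ℝ) * (b - a)^m / b^(N - n + m))
    = 1 / (a ^ N * b ^ (M - N)) := by
  obtain ⟨K', hK⟩ : ∃ K', M - N = K' + 1 := ⟨M - N - 1, by omega⟩
  have hMN : M = N + K' + 1 := by omega
  have step1 : ∀ n ∈ Finset.range N,
      (((M - N + n - 1).choose n : ℝ) * (-1)^n / (b - a)^(M - N + n)) *
      (1 / a ^ (N - n) -
        ∑ m ∈ Finset.range (M - N + n),
          ((N - n - 1 + m).choose m : ℝ) * (b - a)^m / b^(N - n + m))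
      = ∑ i ∈ Finset.range (N - n),
          ((-1:ℝ)^n * ((K'+n).choose n : ℝ) * ((K'+n+i).choose i : ℝ) *
            (a^(n+i) * b^(N-1-(n+i)))) / (a^N * b^(M-1)) := by
    intro n hn
    rw [Finset.mem_range] at hn
    obtain ⟨j, hj⟩ : ∃ j, N - n = j + 1 := ⟨N - n - 1, by omega⟩
    have hNn : N = n + j + 1 := by omega
    simp only [show M - N + n = K' + n + 1 by omega, hj, show K' + n + 1 - 1 = K' + n by omega,
      show j + 1 - 1 = j by omega]
    have hA := claimA j (K'+n) ((b-a)/b)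
    have hx : 1 - (b-a)/b = a/b := by field_simp; ring
    rw [hx] at hA
    set S1 := ∑ m ∈ Finset.range (K'+n+1), ((j+m).choose m : ℝ) * ((b-a)/b)^m with hS1
    set S2 := ∑ i ∈ Finset.range (j+1), ((K'+n+i).choose i : ℝ) * (a/b)^i with hS2
    have hb1 : ∑ m ∈ Finset.range (K'+n+1), ((j+m).choose m : ℝ) * (b-a)^m / b^(j+1+m)
        = S1 / b^(j+1) := by
      rw [hS1, Finset.sum_div]
      refine Finset.sum_congr rfl fun m _ => ?_
      rw [div_pow, pow_add]
      ring
    rw [hb1]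
    have hR : ∑ i ∈ Finset.range (j+1),
          ((-1:ℝ)^n * ((K'+n).choose n : ℝ) * ((K'+n+i).choose i : ℝ) *
            (a^(n+i) * b^(N-1-(n+i)))) / (a^N * b^(M-1))
        = ((-1:ℝ)^n * ((K'+n).choose n : ℝ) * S2) /
          (b^(K'+n+1) * a^(j+1)) := by
      rw [hS2, Finset.mul_sum, Finset.sum_div]
      refine Finset.sum_congr rfl fun i hi => ?_
      rw [Finset.mem_range] at hi
      obtain ⟨e, he⟩ : ∃ e, j = i + e := ⟨j - i, by omega⟩
      rw [show N-1-(n+i) = e by omega, show N = n+j+1 by omega, show M-1 = n+j+K'+1 by omega, he]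
      rw [div_pow]
      field_simp
      ring
    rw [hR]
    have h2 : a^(j+1) * S1 * b^(K'+n+1) + (b-a)^(K'+n+1) * S2 * b^(j+1)
        = b^(j+1) * b^(K'+n+1) := by
      rw [div_pow, div_pow] at hA
      field_simp at hA
      linear_combination hA
    have hbr : 1 / a^(j+1) - S1 / b^(j+1)
        = (b-a)^(K'+n+1) * S2 / (b^(K'+n+1) * a^(j+1)) := by
      rw [div_sub_div _ _ (pow_ne_zero _ ha) (pow_ne_zero _ hb), div_eq_div_iff (mul_ne_zero (pow_ne_zero _ ha) (pow_ne_zero _ hb)) (mul_ne_zero (pow_ne_zero _ hb) (pow_ne_zero _ ha))]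
      linear_combination (-a^(j+1)) * h2
    rw [hbr]
    field_simp
  rw [Finset.sum_congr rfl step1]
  simp only [← Finset.sum_div]
  rw [triangle (fun n i => ((-1:ℝ)^n * ((K'+n).choose n : ℝ) * ((K'+n+i).choose i : ℝ) *
            (a^(n+i) * b^(N-1-(n+i))))) N]
  have step2 : ∀ p ∈ Finset.range N,
      (∑ n ∈ Finset.range (p+1), ((-1:ℝ)^n * ((K'+n).choose n : ℝ) *
          ((K'+n+(p-n)).choose (p-n) : ℝ) * (a^(n+(p-n)) * b^(N-1-(n+(p-n))))))
      = if p = 0 then b^(N-1) else 0 := by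
    intro p hp
    rw [Finset.mem_range] at hp
    have hcong : ∀ n ∈ Finset.range (p+1),
        ((-1:ℝ)^n * ((K'+n).choose n : ℝ) * ((K'+n+(p-n)).choose (p-n) : ℝ) *
          (a^(n+(p-n)) * b^(N-1-(n+(p-n)))))
        = ((-1:ℝ)^n * (((K'+p) - p + n).choose n : ℝ) * (((K'+p)).choose (p-n) : ℝ)) *
          (a^p * b^(N-1-p)) := by
      intro n hn
      rw [Finset.mem_range] at hn
      rw [show n+(p-n) = p by omega, show K'+n+(p-n) = K'+p by omega,
        show (K'+p) - p + n = K' + n by omega]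
    rw [Finset.sum_congr rfl hcong, ← Finset.sum_mul, claimB (K'+p) p (by omega)]
    by_cases hp0 : p = 0 <;> simp [hp0]
  rw [Finset.sum_congr rfl step2, Finset.sum_ite_eq' (Finset.range N) 0 (fun _ => b^(N-1)),
    if_pos (Finset.mem_range.mpr (by omega))]
  rw [show M - 1 = (N-1) + (M-N) by omega, pow_add]
  field_simp


lemma gammaPDFReal_mul_exp {a r c : ℝ} (ha : 0 < a) (hr : 0 < r) (hc : 0 ≤ c) (x : ℝ) :
    gammaPDFReal a r x * Real.exp (-(c * x)) = (r / (r + c)) ^ a * gammaPDFReal a (r + c) x := by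
  have hrc : 0 < r + c := by linarith
  unfold gammaPDFReal
  split_ifs with h
  · have hexp : Real.exp (-(r * x)) * Real.exp (-(c * x)) = Real.exp (-((r + c) * x)) := by
      rw [← Real.exp_add]; ring_nf
    have hdiv : (r / (r + c)) ^ a = r ^ a / (r + c) ^ a := Real.div_rpow hr.le hrc.le a
    rw [hdiv, ← hexp]
    have h1 : (r + c) ^ a ≠ 0 := (Real.rpow_pos_of_pos hrc a).ne'
    have h2 : Real.Gamma a ≠ 0 := (Real.Gamma_pos_of_pos ha).ne'
    field_simp
  · simp

lemma integral_exp_gammaMeasure {a r c : ℝ} (ha : 0 < a) (hr : 0 < r) (hc : 0 ≤ c) :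
    ∫ x, Real.exp (-(c * x)) ∂(gammaMeasure a r) = (r / (r + c)) ^ a := by
  have hrc : 0 < r + c := by linarith
  have hmeas : Measurable fun x : ℝ => Real.exp (-(c * x)) :=
    (measurable_id.const_mul c).neg.exp
  have hconst : (0:ℝ) ≤ (r / (r + c)) ^ a := (Real.rpow_pos_of_pos (by positivity) a).le
  have hgm : gammaMeasure a r = volume.withDensity (gammaPDF a r) := rfl
  rw [integral_eq_lintegral_of_nonneg_ae (ae_of_all _ fun x => (Real.exp_pos _).le)
    hmeas.aestronglyMeasurable]
  have hm1 : Measurable (gammaPDF a r) :=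
    ENNReal.measurable_ofReal.comp (measurable_gammaPDFReal a r)
  have hm1' : Measurable (gammaPDF a (r + c)) :=
    ENNReal.measurable_ofReal.comp (measurable_gammaPDFReal a (r + c))
  have hm2 : Measurable fun x : ℝ => ENNReal.ofReal (Real.exp (-(c * x))) :=
    ENNReal.measurable_ofReal.comp hmeas
  rw [hgm, lintegral_withDensity_eq_lintegral_mul _ hm1 hm2]
  have hpt : ∀ x : ℝ, (gammaPDF a r x) * ENNReal.ofReal (Real.exp (-(c * x)))
      = ENNReal.ofReal ((r / (r + c)) ^ a) * gammaPDF a (r + c) x := by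
    intro x
    rw [gammaPDF, gammaPDF, ← ENNReal.ofReal_mul (gammaPDFReal_nonneg ha hr x),
      gammaPDFReal_mul_exp ha hr hc x,
      ENNReal.ofReal_mul hconst]
  simp only [Pi.mul_apply]
  rw [lintegral_congr hpt, lintegral_const_mul _ hm1',
    lintegral_gammaPDF_eq_one ha hrc, mul_one, ENNReal.toReal_ofReal hconst]

/-- Lemma 2 of the paper, case `N/M < φ < 1` (i.e. `P_n < P_s`): Laplace transform
`E[e^(-c(X+Y))]` of the sum of the independent signal gain `X ~ Gamma(N, P_s)` and
AN gain `Y ~ Gamma(M-N, P_n)` (shape/scale convention, i.e. rates `P_s⁻¹`, `P_n⁻¹`). -/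
theorem laplace_sum_gamma_Pn_lt_Ps
    {Ω : Type*} [MeasurableSpace Ω] (P : Measure Ω) [IsProbabilityMeasure P]
    (N M : ℕ) (hN : 1 ≤ N) (hM : N < M)
    (Ps Pn : ℝ) (hPn : 0 < Pn) (hPnPs : Pn < Ps)
    (ζ : ℝ) (hζ : ζ = (Pn - Ps) / (Ps * Pn))
    (X Y : Ω → ℝ) (hX : Measurable X) (hY : Measurable Y)
    (hIndep : IndepFun X Y P)
    (hXlaw : P.map X = gammaMeasure (N : ℝ) Ps⁻¹)
    (hYlaw : P.map Y = gammaMeasure ((M : ℝ) - N) Pn⁻¹)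
    (c : ℝ) (hc : 0 < c)
    (τ₁ τ₂ : ℝ) (hτ₁ : τ₁ = Ps⁻¹ + c) (hτ₂ : τ₂ = Pn⁻¹ + c) :
    ∫ ω, Real.exp (-(c * (X ω + Y ω))) ∂P =
      ∑ n ∈ Finset.range N,
        (((M - N + n - 1).choose n : ℝ) * Ps ^ ((M : ℤ) - 2 * N) /
            (ζ ^ n * (Ps - Pn) ^ (M - N))) *
          (1 / τ₁ ^ (N - n) -
            ∑ m ∈ Finset.range (M - N + n),
              ((N - n - 1 + m).choose m : ℝ) * (-ζ) ^ m / τ₂ ^ (N - n + m)) := by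
  have hPs : 0 < Ps := hPn.trans hPnPs
  have hPs0 : Ps ≠ 0 := hPs.ne'
  have hPn0 : Pn ≠ 0 := hPn.ne'
  have hτ₁pos : 0 < τ₁ := by rw [hτ₁]; positivity
  have hτ₂pos : 0 < τ₂ := by rw [hτ₂]; positivity
  have hdpos : 0 < τ₂ - τ₁ := by
    rw [hτ₁, hτ₂]
    have : Ps⁻¹ < Pn⁻¹ := by
      rw [inv_lt_inv₀ hPs hPn]
      exact hPnPs
    linarith
  have hd0 : τ₂ - τ₁ ≠ 0 := hdpos.ne'
  have hζd : ζ = -(τ₂ - τ₁) := by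
    rw [hζ, hτ₁, hτ₂]
    field_simp
    ring
  -- Step 1: compute the Laplace transform (left-hand side)
  have hmexp : Measurable fun x : ℝ => Real.exp (-(c * x)) :=
    (measurable_id.const_mul c).neg.exp
  have hLX : ∫ ω, Real.exp (-(c * X ω)) ∂P = (Ps⁻¹ / τ₁) ^ N := by
    have h1 : ∫ ω, Real.exp (-(c * X ω)) ∂P = ∫ x, Real.exp (-(c * x)) ∂(P.map X) := by
      rw [integral_map hX.aemeasurable hmexp.aestronglyMeasurable]
    rw [h1, hXlaw, integral_exp_gammaMeasure (by exact_mod_cast Nat.cast_pos.mpr (by omega))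
      (by positivity) hc.le, hτ₁, Real.rpow_natCast]
  have hLY : ∫ ω, Real.exp (-(c * Y ω)) ∂P = (Pn⁻¹ / τ₂) ^ (M - N) := by
    have h1 : ∫ ω, Real.exp (-(c * Y ω)) ∂P = ∫ x, Real.exp (-(c * x)) ∂(P.map Y) := by
      rw [integral_map hY.aemeasurable hmexp.aestronglyMeasurable]
    have hMNcast : (M : ℝ) - N = ((M - N : ℕ) : ℝ) := by
      rw [Nat.cast_sub hM.le]
    have hMNpos : (0:ℝ) < (M:ℝ) - N := by
      have hlt : (N:ℝ) < M := by exact_mod_cast hM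
      linarith
    rw [h1, hYlaw, integral_exp_gammaMeasure hMNpos (by positivity) hc.le, hMNcast,
      Real.rpow_natCast, hτ₂]
  have hprod : ∫ ω, Real.exp (-(c * (X ω + Y ω))) ∂P
      = (∫ ω, Real.exp (-(c * X ω)) ∂P) * ∫ ω, Real.exp (-(c * Y ω)) ∂P := by
    have hfg : ∀ ω, Real.exp (-(c * (X ω + Y ω)))
        = Real.exp (-(c * X ω)) * Real.exp (-(c * Y ω)) := by
      intro ω
      rw [← Real.exp_add]
      ring_nf
    simp_rw [hfg]
    have hind2 : IndepFun (fun ω => Real.exp (-(c * X ω))) (fun ω => Real.exp (-(c * Y ω))) P :=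
      hIndep.comp hmexp hmexp
    exact hind2.integral_fun_mul_eq_mul_integral
      (hmexp.comp hX).aestronglyMeasurable (hmexp.comp hY).aestronglyMeasurable
  -- Step 2: the right-hand side via the algebraic identity
  have key := main_alg N M hN hM τ₁ τ₂ hτ₁pos.ne' hτ₂pos.ne' hd0
  have hz : Ps ^ ((M : ℤ) - 2 * N) = Ps ^ (M - N) / Ps ^ N := by
    have hcast : ((M - N : ℕ) : ℤ) = (M : ℤ) - N := by
      exact_mod_cast Int.ofNat_sub hM.le
    rw [show (M : ℤ) - 2 * N = ((M - N : ℕ) : ℤ) - (N : ℤ) by rw [hcast]; ring,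
      zpow_sub₀ hPs0, zpow_natCast, zpow_natCast]
  have hPsPn : Ps - Pn = (τ₂ - τ₁) * Ps * Pn := by
    rw [hτ₁, hτ₂]
    field_simp
    ring
  have hsum : ∑ n ∈ Finset.range N,
        (((M - N + n - 1).choose n : ℝ) * Ps ^ ((M : ℤ) - 2 * N) /
            (ζ ^ n * (Ps - Pn) ^ (M - N))) *
          (1 / τ₁ ^ (N - n) -
            ∑ m ∈ Finset.range (M - N + n),
              ((N - n - 1 + m).choose m : ℝ) * (-ζ) ^ m / τ₂ ^ (N - n + m))
      = ∑ n ∈ Finset.range N, ((Ps⁻¹) ^ N * (Pn⁻¹) ^ (M - N)) *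
          ((((M - N + n - 1).choose n : ℝ) * (-1) ^ n / (τ₂ - τ₁) ^ (M - N + n)) *
            (1 / τ₁ ^ (N - n) -
              ∑ m ∈ Finset.range (M - N + n),
                ((N - n - 1 + m).choose m : ℝ) * (τ₂ - τ₁) ^ m / τ₂ ^ (N - n + m))) := by
    refine Finset.sum_congr rfl fun n _ => ?_
    rw [hζd, neg_neg, hz, hPsPn]
    have hcoeff : ((M - N + n - 1).choose n : ℝ) * (Ps ^ (M - N) / Ps ^ N) /
          ((-(τ₂ - τ₁)) ^ n * ((τ₂ - τ₁) * Ps * Pn) ^ (M - N))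
        = ((Ps⁻¹) ^ N * (Pn⁻¹) ^ (M - N)) *
          (((M - N + n - 1).choose n : ℝ) * (-1) ^ n / (τ₂ - τ₁) ^ (M - N + n)) := by
      rw [mul_pow, mul_pow, neg_pow, pow_add]
      field_simp
      have hone : (-1:ℝ)^n * (-1:ℝ)^n = 1 := by
        rw [← pow_add]
        exact Even.neg_one_pow ⟨n, rfl⟩
      rw [sq, hone, one_div, one_div, inv_pow, inv_pow]
      field_simp
    rw [hcoeff]
    ring
  rw [hprod, hLX, hLY, hsum, ← Finset.mul_sum, key, div_pow, div_pow]
  field_simp
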